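/- Let ρ₁, ρ₂ be real numbers with ρ₁ < 1, ρ₂ < 1 and ρ₁ + ρ₂ > 1. Then there exists a constant C = C(ρ₁, ρ₂) such that for all real c₁, c₂, ∫_{-∞}^{∞} dx / (⟨x - c₁⟩^{ρ₁} ⟨x - c₂⟩^{ρ₂}) ≤ C / ⟨c₁ - c₂⟩^{ρ₁ + ρ₂ - 1}. -/

import Mathlib

open MeasureTheory Real Set

noncomputable def Jb (y : ℝ) : ℝ := Real.sqrt (1 + y ^ 2)

lemma Jb_pos (y : ℝ) : 0 < Jb y := Real.sqrt_pos.2 (by positivity)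

lemma one_le_Jb (y : ℝ) : 1 ≤ Jb y := by
  rw [show (1:ℝ) = Real.sqrt 1 by simp [Real.sqrt_one]]
  exact Real.sqrt_le_sqrt (by nlinarith [sq_nonneg y])

lemma abs_le_Jb (y : ℝ) : |y| ≤ Jb y := by
  rw [← Real.sqrt_sq_eq_abs]
  exact Real.sqrt_le_sqrt (by nlinarith)

lemma Jb_mono {a b : ℝ} (h : |a| ≤ |b|) : Jb a ≤ Jb b := by
  apply Real.sqrt_le_sqrt
  have : a ^ 2 ≤ b ^ 2 := by
    rw [← sq_abs a, ← sq_abs b]; exact pow_le_pow_left₀ (abs_nonneg a) h 2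
  linarith

lemma Jb_half {d y : ℝ} (h : |d| ≤ 2 * |y|) : Jb d ≤ 2 * Jb y := by
  have h2 : d ^ 2 ≤ 4 * y ^ 2 := by
    have := pow_le_pow_left₀ (abs_nonneg d) h 2
    rw [sq_abs, mul_pow, sq_abs] at this; linarith
  calc Jb d = Real.sqrt (1 + d ^ 2) := rfl
    _ ≤ Real.sqrt (4 * (1 + y ^ 2)) := Real.sqrt_le_sqrt (by linarith)
    _ = 2 * Jb y := by
        rw [show (4 : ℝ) * (1 + y^2) = 2^2 * (1+y^2) by ring, Real.sqrt_mul (by positivity),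
          Real.sqrt_sq (by norm_num)]; rfl

lemma one_add_abs_le (y : ℝ) : 1 + |y| ≤ Real.sqrt 2 * Jb y := by
  have := one_add_norm_le_sqrt_two_mul_sqrt (y : ℝ)
  simpa [Real.norm_eq_abs, sq_abs, Jb] using this

lemma Jb_le_sqrt2_mul_self {y : ℝ} (hy : 1 ≤ y) : Jb y ≤ Real.sqrt 2 * y := by
  rw [show Real.sqrt 2 * y = Real.sqrt (2 * y ^ 2) by
      rw [Real.sqrt_mul (by norm_num), Real.sqrt_sq (by linarith)]]
  exact Real.sqrt_le_sqrt (by nlinarith)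

lemma continuous_Jb : Continuous Jb := by
  unfold Jb; fun_prop

lemma continuous_Jb_rpow (t : ℝ) : Continuous (fun y => Jb y ^ t) :=
  continuous_Jb.rpow_const (fun y => Or.inl (Jb_pos y).ne')

lemma integrable_Jb {σ : ℝ} (hσ : 1 < σ) : Integrable (fun y : ℝ => Jb y ^ (-σ)) := by
  have h : ∀ y : ℝ, Jb y ^ (-σ) = ((1:ℝ) + ‖y‖ ^ 2) ^ (-σ / 2) := by
    intro y
    rw [Real.rpow_div_two_eq_sqrt _ (by positivity)]
    simp [Jb, Real.norm_eq_abs, sq_abs]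
  simp only [h]
  exact integrable_rpow_neg_one_add_norm_sq (by simpa using hσ)

lemma rpow_anti {a b t : ℝ} (ha : 0 < a) (hab : a ≤ b) (ht : t ≤ 0) : b ^ t ≤ a ^ t :=
  Real.rpow_le_rpow_of_nonpos ha hab ht

lemma ball_bound {ρ : ℝ} (h0 : 0 < ρ) (h1 : ρ < 1) :
    ∃ C > 0, ∀ R : ℝ, 0 ≤ R → ∫ y in (-R)..R, Jb y ^ (-ρ) ≤ C * Jb R ^ (1 - ρ) := by
  have h1ρ : (0:ℝ) < 1 - ρ := by linarith
  refine ⟨2 * Real.sqrt 2 ^ ρ * Real.sqrt 2 / (1 - ρ), by positivity, fun R hR => ?_⟩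
  have hint : ∀ a b : ℝ, IntervalIntegrable (fun y => Jb y ^ (-ρ)) volume a b :=
    fun a b => (continuous_Jb_rpow (-ρ)).intervalIntegrable a b
  have heven : ∫ y in (-R)..(0:ℝ), Jb y ^ (-ρ) = ∫ y in (0:ℝ)..R, Jb y ^ (-ρ) := by
    have h := intervalIntegral.integral_comp_neg (a := 0) (b := R) (fun y => Jb y ^ (-ρ))
    simp only [neg_zero] at h
    rw [← h]
    apply intervalIntegral.integral_congr
    intro y _
    simp [Jb, neg_sq]
  have hsplit : ∫ y in (-R)..R, Jb y ^ (-ρ)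
      = (∫ y in (-R)..(0:ℝ), Jb y ^ (-ρ)) + ∫ y in (0:ℝ)..R, Jb y ^ (-ρ) :=
    (intervalIntegral.integral_add_adjacent_intervals (hint _ _) (hint _ _)).symm
  have hptw : ∀ y ∈ Icc (0:ℝ) R, Jb y ^ (-ρ) ≤ Real.sqrt 2 ^ ρ * (1 + y) ^ (-ρ) := by
    intro y hy
    have hy0 : 0 ≤ y := hy.1
    have h1y : (0:ℝ) < 1 + y := by linarith
    have key : 1 + y ≤ Real.sqrt 2 * Jb y := by
      have := one_add_abs_le y; rwa [abs_of_nonneg hy0] at this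
    have : (1 + y) ^ (-ρ) ≥ (Real.sqrt 2 * Jb y) ^ (-ρ) := rpow_anti h1y key (by linarith)
    calc Jb y ^ (-ρ) = Real.sqrt 2 ^ ρ * ((Real.sqrt 2 * Jb y) ^ (-ρ)) := by
          rw [Real.mul_rpow (by positivity) (Jb_pos y).le, ← mul_assoc,
            ← Real.rpow_add (by positivity : (0:ℝ) < Real.sqrt 2)]
          simp
      _ ≤ Real.sqrt 2 ^ ρ * (1 + y) ^ (-ρ) := by
          have h2 : (0:ℝ) ≤ Real.sqrt 2 ^ ρ := by positivity
          nlinarith [this]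
  have hcont : IntervalIntegrable (fun y : ℝ => Real.sqrt 2 ^ ρ * (1 + y) ^ (-ρ)) volume 0 R := by
    apply ContinuousOn.intervalIntegrable
    apply ContinuousOn.mul continuousOn_const
    apply ContinuousOn.rpow_const (by fun_prop)
    intro y hy
    rw [Set.uIcc_of_le hR] at hy
    exact Or.inl (by nlinarith [hy.1])
  have hhalf : ∫ y in (0:ℝ)..R, Jb y ^ (-ρ)
      ≤ Real.sqrt 2 ^ ρ * Real.sqrt 2 * Jb R ^ (1 - ρ) / (1 - ρ) := by
    calc ∫ y in (0:ℝ)..R, Jb y ^ (-ρ)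
        ≤ ∫ y in (0:ℝ)..R, Real.sqrt 2 ^ ρ * (1 + y) ^ (-ρ) :=
          intervalIntegral.integral_mono_on hR (hint _ _) hcont hptw
      _ = Real.sqrt 2 ^ ρ * ∫ y in (0:ℝ)..R, (1 + y) ^ (-ρ) := by
          rw [intervalIntegral.integral_const_mul]
      _ = Real.sqrt 2 ^ ρ * ∫ u in (1:ℝ)..(1+R), u ^ (-ρ) := by
          rw [intervalIntegral.integral_comp_add_left (fun u => u ^ (-ρ)) 1]
          norm_num
      _ = Real.sqrt 2 ^ ρ * (((1+R) ^ (1 - ρ) - (1:ℝ) ^ (1 - ρ)) / (1 - ρ)) := by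
          rw [integral_rpow (Or.inl (by linarith : (-1:ℝ) < -ρ)),
            show -ρ + 1 = 1 - ρ from by ring]
      _ ≤ Real.sqrt 2 ^ ρ * Real.sqrt 2 * Jb R ^ (1 - ρ) / (1 - ρ) := by
          have h1R : (0:ℝ) ≤ 1 + R := by linarith
          have key : 1 + R ≤ Real.sqrt 2 * Jb R := by
            have := one_add_abs_le R; rwa [abs_of_nonneg hR] at this
          have hJR : (0:ℝ) < Jb R ^ (1-ρ) := Real.rpow_pos_of_pos (Jb_pos R) _
          have h3 : Real.sqrt 2 ^ (1-ρ) ≤ Real.sqrt 2 := by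
            nth_rewrite 2 [← Real.rpow_one (Real.sqrt 2)]
            exact Real.rpow_le_rpow_of_exponent_le (by
              rw [show (1:ℝ) = Real.sqrt 1 by simp]
              exact Real.sqrt_le_sqrt (by norm_num)) (by linarith)
          have hA : (1+R) ^ (1-ρ) ≤ Real.sqrt 2 * Jb R ^ (1-ρ) := by
            calc (1+R) ^ (1-ρ) ≤ (Real.sqrt 2 * Jb R) ^ (1-ρ) :=
                  Real.rpow_le_rpow h1R key (by linarith)
              _ = Real.sqrt 2 ^ (1-ρ) * Jb R ^ (1-ρ) :=
                  Real.mul_rpow (by positivity) (Jb_pos R).le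
              _ ≤ Real.sqrt 2 * Jb R ^ (1-ρ) := by
                  exact mul_le_mul_of_nonneg_right h3 hJR.le
          calc Real.sqrt 2 ^ ρ * (((1+R) ^ (1 - ρ) - (1:ℝ) ^ (1 - ρ)) / (1 - ρ))
              ≤ Real.sqrt 2 ^ ρ * ((Real.sqrt 2 * Jb R ^ (1-ρ)) / (1 - ρ)) := by
                gcongr
                rw [Real.one_rpow]; linarith [hA]
            _ = Real.sqrt 2 ^ ρ * Real.sqrt 2 * Jb R ^ (1 - ρ) / (1 - ρ) := by ring
  calc ∫ y in (-R)..R, Jb y ^ (-ρ)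
      = 2 * ∫ y in (0:ℝ)..R, Jb y ^ (-ρ) := by rw [hsplit, heven]; ring
    _ ≤ 2 * (Real.sqrt 2 ^ ρ * Real.sqrt 2 * Jb R ^ (1 - ρ) / (1 - ρ)) := by linarith [hhalf]
    _ = 2 * Real.sqrt 2 ^ ρ * Real.sqrt 2 / (1 - ρ) * Jb R ^ (1 - ρ) := by ring

lemma tail_bound {σ : ℝ} (hσ : 1 < σ) :
    ∃ C > 0, ∀ R : ℝ, 0 ≤ R → ∫ y in Ici R, Jb y ^ (-σ) ≤ C * Jb R ^ (1 - σ) := by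
  have hσ1 : (0:ℝ) < σ - 1 := by linarith
  have hints : Integrable (fun y : ℝ => Jb y ^ (-σ)) := integrable_Jb hσ
  obtain ⟨C₀, hC₀0, hC₀le⟩ : ∃ C₀ : ℝ, 0 ≤ C₀ ∧
      ∀ R : ℝ, ∫ y in Ici R, Jb y ^ (-σ) ≤ C₀ :=
    ⟨∫ y : ℝ, Jb y ^ (-σ), integral_nonneg fun y => Real.rpow_nonneg (Jb_pos y).le _,
      fun R => setIntegral_le_integral hints (Filter.Eventually.of_forall fun y =>
        Real.rpow_nonneg (Jb_pos y).le _)⟩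
  refine ⟨C₀ * Real.sqrt 2 ^ (σ - 1) + Real.sqrt 2 ^ (σ - 1) / (σ - 1) + 1, by positivity,
    fun R hR => ?_⟩
  have hJR : (0:ℝ) < Jb R ^ (1 - σ) := Real.rpow_pos_of_pos (Jb_pos R) _
  rcases le_total R 1 with hR1 | hR1
  · -- small R
    have step1 : ∫ y in Ici R, Jb y ^ (-σ) ≤ C₀ := hC₀le R
    have hJle : Jb R ≤ Real.sqrt 2 := by
      have h := Jb_mono (a := R) (b := 1) (by rw [abs_of_nonneg hR, abs_one]; exact hR1)
      have h2 : Jb 1 = Real.sqrt 2 := by norm_num [Jb]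
      linarith [h2.le, h2.ge]
    have step2 : Real.sqrt 2 ^ (1 - σ) ≤ Jb R ^ (1 - σ) :=
      rpow_anti (Jb_pos R) hJle (by linarith)
    have step3 : (1:ℝ) ≤ Real.sqrt 2 ^ (σ - 1) * Jb R ^ (1 - σ) := by
      have h4 : Real.sqrt 2 ^ (σ - 1) * Real.sqrt 2 ^ (1 - σ) = 1 := by
        rw [← Real.rpow_add (by positivity)]; norm_num
      calc (1:ℝ) = Real.sqrt 2 ^ (σ - 1) * Real.sqrt 2 ^ (1 - σ) := h4.symm
        _ ≤ Real.sqrt 2 ^ (σ - 1) * Jb R ^ (1 - σ) := by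
            exact mul_le_mul_of_nonneg_left step2 (by positivity)
    calc ∫ y in Ici R, Jb y ^ (-σ) ≤ C₀ := step1
      _ = C₀ * 1 := by ring
      _ ≤ C₀ * (Real.sqrt 2 ^ (σ - 1) * Jb R ^ (1 - σ)) :=
          mul_le_mul_of_nonneg_left step3 hC₀0
      _ ≤ (C₀ * Real.sqrt 2 ^ (σ - 1) + Real.sqrt 2 ^ (σ - 1) / (σ - 1) + 1) * Jb R ^ (1 - σ) := by
          have : (0:ℝ) ≤ Real.sqrt 2 ^ (σ - 1) / (σ - 1) + 1 := by positivity
          nlinarith [hJR]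
  · -- large R
    have hR0 : (0:ℝ) < R := by linarith
    have hptw : ∀ y ∈ Ioi R, Jb y ^ (-σ) ≤ y ^ (-σ) := by
      intro y hy
      have hy0 : (0:ℝ) < y := lt_trans hR0 hy
      have : y ≤ Jb y := by
        have := abs_le_Jb y; rwa [abs_of_pos hy0] at this
      exact rpow_anti hy0 this (by linarith)
    have hintOn : IntegrableOn (fun y : ℝ => y ^ (-σ)) (Ioi R) :=
      integrableOn_Ioi_rpow_of_lt (by linarith) hR0
    have step1 : ∫ y in Ici R, Jb y ^ (-σ) ≤ ∫ y in Ioi R, y ^ (-σ) := by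
      rw [integral_Ici_eq_integral_Ioi]
      exact setIntegral_mono_on hints.integrableOn hintOn measurableSet_Ioi hptw
    have step2 : ∫ y in Ioi R, y ^ (-σ) = R ^ (1 - σ) / (σ - 1) := by
      rw [integral_Ioi_rpow_of_lt (by linarith) hR0]
      rw [show -σ + 1 = 1 - σ from by ring,
        div_eq_div_iff (ne_of_lt (by linarith : (1:ℝ) - σ < 0)) (ne_of_gt hσ1)]
      ring
    have hJ2R : Jb R ≤ Real.sqrt 2 * R := Jb_le_sqrt2_mul_self hR1
    have step3 : R ^ (1 - σ) ≤ Real.sqrt 2 ^ (σ - 1) * Jb R ^ (1 - σ) := by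
      have h5 : Jb R ^ (1 - σ) ≥ (Real.sqrt 2 * R) ^ (1 - σ) :=
        rpow_anti (Jb_pos R) hJ2R (by linarith)
      have h6 : (Real.sqrt 2 * R) ^ (1 - σ) = Real.sqrt 2 ^ (1 - σ) * R ^ (1 - σ) :=
        Real.mul_rpow (by positivity) hR0.le
      have h7 : Real.sqrt 2 ^ (σ - 1) * Real.sqrt 2 ^ (1 - σ) = 1 := by
        rw [← Real.rpow_add (by positivity)]; norm_num
      calc R ^ (1 - σ) = Real.sqrt 2 ^ (σ - 1) * (Real.sqrt 2 ^ (1 - σ) * R ^ (1 - σ)) := by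
            rw [← mul_assoc, h7, one_mul]
        _ = Real.sqrt 2 ^ (σ - 1) * (Real.sqrt 2 * R) ^ (1 - σ) := by rw [h6]
        _ ≤ Real.sqrt 2 ^ (σ - 1) * Jb R ^ (1 - σ) :=
            mul_le_mul_of_nonneg_left h5 (by positivity)
    calc ∫ y in Ici R, Jb y ^ (-σ) ≤ R ^ (1 - σ) / (σ - 1) := step1.trans step2.le
      _ ≤ (Real.sqrt 2 ^ (σ - 1) * Jb R ^ (1 - σ)) / (σ - 1) := div_le_div_of_nonneg_right step3 hσ1.le
      _ = (Real.sqrt 2 ^ (σ - 1) / (σ - 1)) * Jb R ^ (1 - σ) := by ring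
      _ ≤ (C₀ * Real.sqrt 2 ^ (σ - 1) + Real.sqrt 2 ^ (σ - 1) / (σ - 1) + 1) * Jb R ^ (1 - σ) := by
          have : (0:ℝ) ≤ C₀ * Real.sqrt 2 ^ (σ - 1) + 1 := by positivity
          nlinarith [hJR]

lemma Jb_comm (a b : ℝ) : Jb (a - b) = Jb (b - a) := by
  unfold Jb; rw [show (a-b)^2 = (b-a)^2 from by ring]

lemma half_rpow {a : ℝ} (ha : 0 < a) (t : ℝ) : (a / 2) ^ (-t) = 2 ^ t * a ^ (-t) := by
  rw [Real.div_rpow ha.le (by norm_num : (0:ℝ) ≤ 2), Real.rpow_neg ha.le,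
    Real.rpow_neg (by norm_num : (0:ℝ) ≤ 2), div_eq_mul_inv, inv_inv, mul_comm]

lemma key_prod {ρ₁ ρ₂ a b : ℝ} (hρ₁ : 0 < ρ₁) (hρ₂ : 0 < ρ₂) (ha : 0 < a)
    (hab : a ≤ b) : a ^ (-ρ₁) * b ^ (-ρ₂) ≤ a ^ (-(ρ₁ + ρ₂)) := by
  have h1 : b ^ (-ρ₂) ≤ a ^ (-ρ₂) := rpow_anti ha hab (by linarith)
  calc a ^ (-ρ₁) * b ^ (-ρ₂) ≤ a ^ (-ρ₁) * a ^ (-ρ₂) :=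
        mul_le_mul_of_nonneg_left h1 (Real.rpow_pos_of_pos ha _).le
    _ = a ^ (-(ρ₁ + ρ₂)) := by rw [← Real.rpow_add ha]; ring_nf

lemma cont_shift (c t : ℝ) : Continuous (fun x : ℝ => Jb (x - c) ^ t) :=
  (continuous_Jb_rpow t).comp (continuous_id.sub continuous_const)

lemma piece_bound {ρ ρ' CA : ℝ} (hρ0 : 0 < ρ) (hρ1 : ρ < 1) (hρ'0 : 0 < ρ')
    (hCA : ∀ R : ℝ, 0 ≤ R → ∫ y in (-R)..R, Jb y ^ (-ρ) ≤ CA * Jb R ^ (1 - ρ)) (c c' : ℝ) :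
    ∫ x in Icc (c - |c - c'| / 2) (c + |c - c'| / 2), Jb (x - c) ^ (-ρ) * Jb (x - c') ^ (-ρ')
      ≤ 2 ^ ρ' * CA * Jb (c - c') ^ (1 - (ρ + ρ')) := by
  have hd := abs_nonneg (c - c')
  set R : ℝ := |c - c'| / 2 with hRdef
  have hR0 : (0:ℝ) ≤ R := by positivity
  have hJd := Jb_pos (c - c')
  have ptw : ∀ x ∈ Icc (c - R) (c + R),
      Jb (x - c) ^ (-ρ) * Jb (x - c') ^ (-ρ')
        ≤ (2 ^ ρ' * Jb (c - c') ^ (-ρ')) * Jb (x - c) ^ (-ρ) := by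
    intro x hx
    have hx1 : |x - c| ≤ R := abs_le.mpr ⟨by linarith [hx.1], by linarith [hx.2]⟩
    have htri : |c - c'| ≤ |x - c'| + |x - c| := by
      have h := abs_add_le (x - c') (-(x - c))
      rw [abs_neg] at h
      calc |c - c'| = |x - c' + -(x - c)| := by ring_nf
        _ ≤ |x - c'| + |x - c| := h
    have hx2 : |c - c'| ≤ 2 * |x - c'| := by
      have : R ≤ |x - c'| := by rw [hRdef] at hx1 ⊢; linarith
      rw [hRdef] at this; linarith
    have hJ : Jb (c - c') ≤ 2 * Jb (x - c') := Jb_half hx2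
    have h5 : Jb (x - c') ^ (-ρ') ≤ (Jb (c - c') / 2) ^ (-ρ') :=
      rpow_anti (by positivity) (by linarith) (by linarith)
    have h6 := half_rpow hJd ρ'
    calc Jb (x - c) ^ (-ρ) * Jb (x - c') ^ (-ρ')
        ≤ Jb (x - c) ^ (-ρ) * (2 ^ ρ' * Jb (c - c') ^ (-ρ')) :=
          mul_le_mul_of_nonneg_left (h5.trans_eq h6)
            (Real.rpow_pos_of_pos (Jb_pos _) _).le
      _ = (2 ^ ρ' * Jb (c - c') ^ (-ρ')) * Jb (x - c) ^ (-ρ) := by ring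
  have hint0 : IntegrableOn (fun x => Jb (x - c) ^ (-ρ) * Jb (x - c') ^ (-ρ'))
      (Icc (c - R) (c + R)) :=
    ((cont_shift c (-ρ)).mul (cont_shift c' (-ρ'))).integrableOn_Icc
  have hint1 : IntegrableOn
      (fun x => (2 ^ ρ' * Jb (c - c') ^ (-ρ')) * Jb (x - c) ^ (-ρ)) (Icc (c - R) (c + R)) :=
    (continuous_const.mul (cont_shift c (-ρ))).integrableOn_Icc
  have step1 := setIntegral_mono_on hint0 hint1 measurableSet_Icc ptw
  have step2 : ∫ x in Icc (c - R) (c + R), (2 ^ ρ' * Jb (c - c') ^ (-ρ')) * Jb (x - c) ^ (-ρ)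
      = (2 ^ ρ' * Jb (c - c') ^ (-ρ')) * ∫ x in Icc (c - R) (c + R), Jb (x - c) ^ (-ρ) :=
    MeasureTheory.integral_const_mul _ _
  have step3 : ∫ x in Icc (c - R) (c + R), Jb (x - c) ^ (-ρ) = ∫ y in (-R)..R, Jb y ^ (-ρ) := by
    rw [MeasureTheory.integral_Icc_eq_integral_Ioc,
      ← intervalIntegral.integral_of_le (by linarith : c - R ≤ c + R),
      intervalIntegral.integral_comp_sub_right (fun y => Jb y ^ (-ρ)) c]
    norm_num
  have step4 : ∫ y in (-R)..R, Jb y ^ (-ρ) ≤ CA * Jb R ^ (1 - ρ) := hCA R hR0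
  have step5 : Jb R ^ (1 - ρ) ≤ Jb (c - c') ^ (1 - ρ) := by
    apply Real.rpow_le_rpow (Jb_pos R).le _ (by linarith)
    apply Jb_mono
    rw [abs_of_nonneg hR0]
    simp only [hRdef]
    linarith
  have hCA0 : 0 ≤ CA := by
    have := hCA 0 le_rfl
    simp at this
    have hJ1 : (0:ℝ) < Jb 0 ^ (1 - ρ) := Real.rpow_pos_of_pos (Jb_pos 0) _
    nlinarith [this]
  have hconst : (0:ℝ) ≤ 2 ^ ρ' * Jb (c - c') ^ (-ρ') := by positivity
  calc ∫ x in Icc (c - R) (c + R), Jb (x - c) ^ (-ρ) * Jb (x - c') ^ (-ρ')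
      ≤ (2 ^ ρ' * Jb (c - c') ^ (-ρ')) * ∫ x in Icc (c - R) (c + R), Jb (x - c) ^ (-ρ) := by
        rw [← step2]; exact step1
    _ ≤ (2 ^ ρ' * Jb (c - c') ^ (-ρ')) * (CA * Jb (c - c') ^ (1 - ρ)) := by
        apply mul_le_mul_of_nonneg_left _ hconst
        rw [step3]
        calc ∫ y in (-R)..R, Jb y ^ (-ρ) ≤ CA * Jb R ^ (1 - ρ) := step4
          _ ≤ CA * Jb (c - c') ^ (1 - ρ) := mul_le_mul_of_nonneg_left step5 hCA0
    _ = 2 ^ ρ' * CA * (Jb (c - c') ^ (-ρ') * Jb (c - c') ^ (1 - ρ)) := by ring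
    _ = 2 ^ ρ' * CA * Jb (c - c') ^ (1 - (ρ + ρ')) := by
        rw [← Real.rpow_add hJd, show -ρ' + (1 - ρ) = 1 - (ρ + ρ') from by ring]

lemma Jb_neg (y : ℝ) : Jb (-y) = Jb y := by unfold Jb; rw [neg_sq]

lemma tail_piece {σ CT : ℝ} (hσ : 1 < σ)
    (hCT : ∀ R : ℝ, 0 ≤ R → ∫ y in Ici R, Jb y ^ (-σ) ≤ CT * Jb R ^ (1 - σ))
    (hCT0 : 0 ≤ CT) {R : ℝ} (hR0 : 0 ≤ R) :
    ∫ y in {y : ℝ | R ≤ |y|}, Jb y ^ (-σ) ≤ 2 * CT * Jb R ^ (1 - σ) := by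
  have hg : Integrable (fun y : ℝ => Jb y ^ (-σ)) := integrable_Jb hσ
  have hTm : MeasurableSet {y : ℝ | R ≤ |y|} :=
    measurableSet_le measurable_const continuous_abs.measurable
  have hmono : ∀ y : ℝ, ({y : ℝ | R ≤ |y|}).indicator (fun y => Jb y ^ (-σ)) y
      ≤ (Iic (-R)).indicator (fun y => Jb y ^ (-σ)) y
        + (Ici R).indicator (fun y => Jb y ^ (-σ)) y := by
    intro y
    have h1 : 0 ≤ (Iic (-R)).indicator (fun y => Jb y ^ (-σ)) y :=
      Set.indicator_nonneg (fun z _ => Real.rpow_nonneg (Jb_pos z).le _) y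
    have h2 : 0 ≤ (Ici R).indicator (fun y => Jb y ^ (-σ)) y :=
      Set.indicator_nonneg (fun z _ => Real.rpow_nonneg (Jb_pos z).le _) y
    by_cases hy : R ≤ |y|
    · rw [Set.indicator_of_mem (show y ∈ {y : ℝ | R ≤ |y|} from hy)]
      rcases le_total 0 y with hy0 | hy0
      · have hmem : y ∈ Ici R := by rw [abs_of_nonneg hy0] at hy; exact hy
        rw [Set.indicator_of_mem hmem]; linarith
      · have hmem : y ∈ Iic (-R) := by
          rw [abs_of_nonpos hy0] at hy
          simp only [mem_Iic]; linarith
        rw [Set.indicator_of_mem hmem]; linarith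
    · rw [Set.indicator_of_notMem (show y ∉ {y : ℝ | R ≤ |y|} from hy)]; linarith
  calc ∫ y in {y : ℝ | R ≤ |y|}, Jb y ^ (-σ)
      = ∫ y, ({y : ℝ | R ≤ |y|}).indicator (fun y => Jb y ^ (-σ)) y :=
        (integral_indicator hTm).symm
    _ ≤ ∫ y, ((Iic (-R)).indicator (fun y => Jb y ^ (-σ)) y
          + (Ici R).indicator (fun y => Jb y ^ (-σ)) y) :=
        integral_mono (hg.indicator hTm)
          ((hg.indicator measurableSet_Iic).add (hg.indicator measurableSet_Ici)) hmono
    _ = (∫ y in Iic (-R), Jb y ^ (-σ)) + ∫ y in Ici R, Jb y ^ (-σ) := by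
        rw [integral_add (hg.indicator measurableSet_Iic) (hg.indicator measurableSet_Ici),
          integral_indicator measurableSet_Iic, integral_indicator measurableSet_Ici]
    _ ≤ 2 * CT * Jb R ^ (1 - σ) := by
        have hleft : ∫ y in Iic (-R), Jb y ^ (-σ) = ∫ y in Ici R, Jb y ^ (-σ) := by
          have h := integral_comp_neg_Iic (-R) (fun y => Jb y ^ (-σ))
          simp only [neg_neg] at h
          rw [← integral_Ici_eq_integral_Ioi] at h
          calc ∫ y in Iic (-R), Jb y ^ (-σ) = ∫ y in Iic (-R), Jb (-y) ^ (-σ) := by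
                apply integral_congr_ae; filter_upwards with y; rw [Jb_neg]
            _ = ∫ y in Ici R, Jb y ^ (-σ) := h
        have hIci := hCT R hR0
        linarith

theorem stmt0 (ρ₁ ρ₂ : ℝ) (h₁ : ρ₁ < 1) (h₂ : ρ₂ < 1) (hsum : 1 < ρ₁ + ρ₂) :
    ∃ C > 0, ∀ c₁ c₂ : ℝ,
      (∫ x : ℝ, 1 / ((Real.sqrt (1 + (x - c₁) ^ 2)) ^ ρ₁ *
        (Real.sqrt (1 + (x - c₂) ^ 2)) ^ ρ₂)) ≤
      C / (Real.sqrt (1 + (c₁ - c₂) ^ 2)) ^ (ρ₁ + ρ₂ - 1) := by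
  have hρ₁0 : 0 < ρ₁ := by linarith
  have hρ₂0 : 0 < ρ₂ := by linarith
  obtain ⟨CA, hCA0, hCA⟩ := ball_bound hρ₁0 h₁
  obtain ⟨CB, hCB0, hCB⟩ := ball_bound hρ₂0 h₂
  obtain ⟨CT, hCT0, hCT⟩ := tail_bound hsum
  refine ⟨2 ^ ρ₂ * CA + 2 ^ ρ₁ * CB + 2 * (2 * CT * (2 ^ (ρ₁ + ρ₂ - 1))),
    by positivity, fun c₁ c₂ => ?_⟩
  have hJd : 0 < Jb (c₁ - c₂) := Jb_pos _
  suffices h : (∫ x : ℝ, Jb (x - c₁) ^ (-ρ₁) * Jb (x - c₂) ^ (-ρ₂))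
      ≤ (2 ^ ρ₂ * CA + 2 ^ ρ₁ * CB + 2 * (2 * CT * (2 ^ (ρ₁ + ρ₂ - 1))))
        / Jb (c₁ - c₂) ^ (ρ₁ + ρ₂ - 1) by
    have heq : (∫ x : ℝ, 1 / ((Real.sqrt (1 + (x - c₁) ^ 2)) ^ ρ₁ *
        (Real.sqrt (1 + (x - c₂) ^ 2)) ^ ρ₂))
        = ∫ x : ℝ, Jb (x - c₁) ^ (-ρ₁) * Jb (x - c₂) ^ (-ρ₂) := by
      congr 1
      funext x
      unfold Jb
      rw [Real.rpow_neg (Real.sqrt_nonneg _), Real.rpow_neg (Real.sqrt_nonneg _),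
        ← mul_inv, one_div]
    rw [heq]
    exact h
  set R : ℝ := |c₁ - c₂| / 2 with hRdef
  have hR0 : (0:ℝ) ≤ R := by positivity
  -- basic facts about the integrand
  have hFc : Continuous (fun x : ℝ => Jb (x - c₁) ^ (-ρ₁) * Jb (x - c₂) ^ (-ρ₂)) :=
    (cont_shift c₁ (-ρ₁)).mul (cont_shift c₂ (-ρ₂))
  have hF0 : ∀ x : ℝ, 0 ≤ Jb (x - c₁) ^ (-ρ₁) * Jb (x - c₂) ^ (-ρ₂) := fun x =>
    mul_nonneg (Real.rpow_nonneg (Jb_pos _).le _) (Real.rpow_nonneg (Jb_pos _).le _)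
  have hgint : Integrable
      (fun x : ℝ => Jb (x - c₁) ^ (-(ρ₁ + ρ₂)) + Jb (x - c₂) ^ (-(ρ₁ + ρ₂))) :=
    ((integrable_Jb hsum).comp_sub_right c₁).add ((integrable_Jb hsum).comp_sub_right c₂)
  have hFle : ∀ x : ℝ, Jb (x - c₁) ^ (-ρ₁) * Jb (x - c₂) ^ (-ρ₂)
      ≤ Jb (x - c₁) ^ (-(ρ₁ + ρ₂)) + Jb (x - c₂) ^ (-(ρ₁ + ρ₂)) := by
    intro x
    rcases le_total (Jb (x - c₁)) (Jb (x - c₂)) with hcmp | hcmp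
    · have hkey := key_prod hρ₁0 hρ₂0 (Jb_pos (x - c₁)) hcmp
      have h2 : 0 ≤ Jb (x - c₂) ^ (-(ρ₁ + ρ₂)) := Real.rpow_nonneg (Jb_pos _).le _
      linarith
    · have hkey := key_prod hρ₂0 hρ₁0 (Jb_pos (x - c₂)) hcmp
      rw [show -(ρ₂ + ρ₁) = -(ρ₁ + ρ₂) from by ring,
        mul_comm (Jb (x - c₂) ^ (-ρ₂))] at hkey
      have h2 : 0 ≤ Jb (x - c₁) ^ (-(ρ₁ + ρ₂)) := Real.rpow_nonneg (Jb_pos _).le _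
      linarith
  have hFint : Integrable (fun x : ℝ => Jb (x - c₁) ^ (-ρ₁) * Jb (x - c₂) ^ (-ρ₂)) := by
    apply hgint.mono' hFc.aestronglyMeasurable
    refine Filter.Eventually.of_forall fun x => ?_
    rw [Real.norm_eq_abs, abs_of_nonneg (hF0 x)]
    exact hFle x
  -- the three regions
  have hTm : MeasurableSet {y : ℝ | R ≤ |y|} :=
    measurableSet_le measurable_const continuous_abs.measurable
  have hT1int : Integrable
      (fun x : ℝ => ({y : ℝ | R ≤ |y|}).indicator (fun y => Jb y ^ (-(ρ₁ + ρ₂))) (x - c₁)) :=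
    ((integrable_Jb hsum).indicator hTm).comp_sub_right c₁
  have hT2int : Integrable
      (fun x : ℝ => ({y : ℝ | R ≤ |y|}).indicator (fun y => Jb y ^ (-(ρ₁ + ρ₂))) (x - c₂)) :=
    ((integrable_Jb hsum).indicator hTm).comp_sub_right c₂
  have hAint : Integrable (fun a : ℝ => (Icc (c₁ - R) (c₁ + R)).indicator
      (fun x => Jb (x - c₁) ^ (-ρ₁) * Jb (x - c₂) ^ (-ρ₂)) a) :=
    hFint.indicator measurableSet_Icc
  have hBint : Integrable (fun a : ℝ => (Icc (c₂ - R) (c₂ + R)).indicator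
      (fun x => Jb (x - c₁) ^ (-ρ₁) * Jb (x - c₂) ^ (-ρ₂)) a) :=
    hFint.indicator measurableSet_Icc
  have hABint : Integrable (fun a : ℝ =>
      (Icc (c₁ - R) (c₁ + R)).indicator
        (fun x => Jb (x - c₁) ^ (-ρ₁) * Jb (x - c₂) ^ (-ρ₂)) a
      + (Icc (c₂ - R) (c₂ + R)).indicator
        (fun x => Jb (x - c₁) ^ (-ρ₁) * Jb (x - c₂) ^ (-ρ₂)) a) := hAint.add hBint
  have hTTint : Integrable (fun a : ℝ =>
      ({y : ℝ | R ≤ |y|}).indicator (fun y => Jb y ^ (-(ρ₁ + ρ₂))) (a - c₁)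
      + ({y : ℝ | R ≤ |y|}).indicator (fun y => Jb y ^ (-(ρ₁ + ρ₂))) (a - c₂)) :=
    hT1int.add hT2int
  have master : ∀ x : ℝ, Jb (x - c₁) ^ (-ρ₁) * Jb (x - c₂) ^ (-ρ₂)
      ≤ (Icc (c₁ - R) (c₁ + R)).indicator
          (fun x => Jb (x - c₁) ^ (-ρ₁) * Jb (x - c₂) ^ (-ρ₂)) x
        + (Icc (c₂ - R) (c₂ + R)).indicator
          (fun x => Jb (x - c₁) ^ (-ρ₁) * Jb (x - c₂) ^ (-ρ₂)) x
        + (({y : ℝ | R ≤ |y|}).indicator (fun y => Jb y ^ (-(ρ₁ + ρ₂))) (x - c₁)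
          + ({y : ℝ | R ≤ |y|}).indicator (fun y => Jb y ^ (-(ρ₁ + ρ₂))) (x - c₂)) := by
    intro x
    have hiA : 0 ≤ (Icc (c₁ - R) (c₁ + R)).indicator
        (fun x => Jb (x - c₁) ^ (-ρ₁) * Jb (x - c₂) ^ (-ρ₂)) x :=
      Set.indicator_nonneg (fun z _ => hF0 z) x
    have hiB : 0 ≤ (Icc (c₂ - R) (c₂ + R)).indicator
        (fun x => Jb (x - c₁) ^ (-ρ₁) * Jb (x - c₂) ^ (-ρ₂)) x :=
      Set.indicator_nonneg (fun z _ => hF0 z) x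
    have hiT1 : 0 ≤ ({y : ℝ | R ≤ |y|}).indicator (fun y => Jb y ^ (-(ρ₁ + ρ₂))) (x - c₁) :=
      Set.indicator_nonneg (fun z _ => Real.rpow_nonneg (Jb_pos z).le _) _
    have hiT2 : 0 ≤ ({y : ℝ | R ≤ |y|}).indicator (fun y => Jb y ^ (-(ρ₁ + ρ₂))) (x - c₂) :=
      Set.indicator_nonneg (fun z _ => Real.rpow_nonneg (Jb_pos z).le _) _
    by_cases hxA : x ∈ Icc (c₁ - R) (c₁ + R)
    · rw [Set.indicator_of_mem hxA]; linarith
    by_cases hxB : x ∈ Icc (c₂ - R) (c₂ + R)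
    · rw [Set.indicator_of_mem hxB]; linarith
    have hx1 : R ≤ |x - c₁| := by
      by_contra hlt
      push_neg at hlt
      have := abs_le.mp hlt.le
      exact hxA ⟨by linarith [this.1], by linarith [this.2]⟩
    have hx2 : R ≤ |x - c₂| := by
      by_contra hlt
      push_neg at hlt
      have := abs_le.mp hlt.le
      exact hxB ⟨by linarith [this.1], by linarith [this.2]⟩
    rcases le_total (Jb (x - c₁)) (Jb (x - c₂)) with hcmp | hcmp
    · have hkey := key_prod hρ₁0 hρ₂0 (Jb_pos (x - c₁)) hcmp
      rw [Set.indicator_of_mem (show x - c₁ ∈ {y : ℝ | R ≤ |y|} from hx1)]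
      linarith
    · have hkey := key_prod hρ₂0 hρ₁0 (Jb_pos (x - c₂)) hcmp
      rw [show -(ρ₂ + ρ₁) = -(ρ₁ + ρ₂) from by ring,
        mul_comm (Jb (x - c₂) ^ (-ρ₂))] at hkey
      rw [Set.indicator_of_mem (show x - c₂ ∈ {y : ℝ | R ≤ |y|} from hx2)]
      linarith
  have main_mono := integral_mono hFint
    ((hAint.add hBint).add (hT1int.add hT2int)) master
  simp only [Pi.add_apply] at main_mono
  rw [integral_add hABint hTTint, integral_add hAint hBint,
    integral_add hT1int hT2int, integral_indicator measurableSet_Icc,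
    integral_indicator measurableSet_Icc] at main_mono
  -- bound the four pieces
  have hIA : ∫ x in Icc (c₁ - R) (c₁ + R), Jb (x - c₁) ^ (-ρ₁) * Jb (x - c₂) ^ (-ρ₂)
      ≤ 2 ^ ρ₂ * CA * Jb (c₁ - c₂) ^ (1 - (ρ₁ + ρ₂)) := by
    have := piece_bound hρ₁0 h₁ hρ₂0 hCA c₁ c₂
    rw [← hRdef] at this
    exact this
  have hIB : ∫ x in Icc (c₂ - R) (c₂ + R), Jb (x - c₁) ^ (-ρ₁) * Jb (x - c₂) ^ (-ρ₂)
      ≤ 2 ^ ρ₁ * CB * Jb (c₁ - c₂) ^ (1 - (ρ₁ + ρ₂)) := by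
    have hcomm : ∫ x in Icc (c₂ - R) (c₂ + R), Jb (x - c₁) ^ (-ρ₁) * Jb (x - c₂) ^ (-ρ₂)
        = ∫ x in Icc (c₂ - R) (c₂ + R), Jb (x - c₂) ^ (-ρ₂) * Jb (x - c₁) ^ (-ρ₁) := by
      apply integral_congr_ae
      filter_upwards with x
      ring
    have hpb := piece_bound hρ₂0 h₂ hρ₁0 hCB c₂ c₁
    rw [abs_sub_comm c₂ c₁, ← hRdef, Jb_comm c₂ c₁,
      show 1 - (ρ₂ + ρ₁) = 1 - (ρ₁ + ρ₂) from by ring] at hpb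
    rw [hcomm]
    exact hpb
  have hJRd : Jb R ^ (1 - (ρ₁ + ρ₂)) ≤ 2 ^ (ρ₁ + ρ₂ - 1) * Jb (c₁ - c₂) ^ (1 - (ρ₁ + ρ₂)) := by
    have habs : |c₁ - c₂| ≤ 2 * |R| := by
      rw [abs_of_nonneg hR0, hRdef]; linarith
    have hJhalf : Jb (c₁ - c₂) ≤ 2 * Jb R := Jb_half habs
    have h5 : Jb R ^ (-(ρ₁ + ρ₂ - 1)) ≤ (Jb (c₁ - c₂) / 2) ^ (-(ρ₁ + ρ₂ - 1)) :=
      rpow_anti (by positivity) (by linarith) (by linarith)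
    have h6 := half_rpow hJd (ρ₁ + ρ₂ - 1)
    rw [show 1 - (ρ₁ + ρ₂) = -(ρ₁ + ρ₂ - 1) from by ring]
    calc Jb R ^ (-(ρ₁ + ρ₂ - 1)) ≤ (Jb (c₁ - c₂) / 2) ^ (-(ρ₁ + ρ₂ - 1)) := h5
      _ = 2 ^ (ρ₁ + ρ₂ - 1) * Jb (c₁ - c₂) ^ (-(ρ₁ + ρ₂ - 1)) := h6
  have hIT : ∀ c : ℝ, (∫ x : ℝ, ({y : ℝ | R ≤ |y|}).indicator
        (fun y => Jb y ^ (-(ρ₁ + ρ₂))) (x - c))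
      ≤ 2 * CT * (2 ^ (ρ₁ + ρ₂ - 1)) * Jb (c₁ - c₂) ^ (1 - (ρ₁ + ρ₂)) := by
    intro c
    rw [integral_sub_right_eq_self
      (({y : ℝ | R ≤ |y|}).indicator (fun y => Jb y ^ (-(ρ₁ + ρ₂)))) c,
      integral_indicator hTm]
    calc ∫ y in {y : ℝ | R ≤ |y|}, Jb y ^ (-(ρ₁ + ρ₂))
        ≤ 2 * CT * Jb R ^ (1 - (ρ₁ + ρ₂)) := tail_piece hsum hCT hCT0.le hR0
      _ ≤ 2 * CT * (2 ^ (ρ₁ + ρ₂ - 1) * Jb (c₁ - c₂) ^ (1 - (ρ₁ + ρ₂))) :=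
          mul_le_mul_of_nonneg_left hJRd (by positivity)
      _ = 2 * CT * (2 ^ (ρ₁ + ρ₂ - 1)) * Jb (c₁ - c₂) ^ (1 - (ρ₁ + ρ₂)) := by ring
  -- assemble
  have htotal : (∫ x : ℝ, Jb (x - c₁) ^ (-ρ₁) * Jb (x - c₂) ^ (-ρ₂))
      ≤ (2 ^ ρ₂ * CA + 2 ^ ρ₁ * CB + 2 * (2 * CT * (2 ^ (ρ₁ + ρ₂ - 1))))
        * Jb (c₁ - c₂) ^ (1 - (ρ₁ + ρ₂)) := by
    have ht1 := hIT c₁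
    have ht2 := hIT c₂
    calc (∫ x : ℝ, Jb (x - c₁) ^ (-ρ₁) * Jb (x - c₂) ^ (-ρ₂)) ≤ _ := main_mono
      _ ≤ (2 ^ ρ₂ * CA + 2 ^ ρ₁ * CB + 2 * (2 * CT * (2 ^ (ρ₁ + ρ₂ - 1))))
          * Jb (c₁ - c₂) ^ (1 - (ρ₁ + ρ₂)) := by
        have hexp : (2:ℝ) * (2 * CT * (2 ^ (ρ₁ + ρ₂ - 1)))
            * Jb (c₁ - c₂) ^ (1 - (ρ₁ + ρ₂))
            = 2 * CT * (2 ^ (ρ₁ + ρ₂ - 1)) * Jb (c₁ - c₂) ^ (1 - (ρ₁ + ρ₂))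
              + 2 * CT * (2 ^ (ρ₁ + ρ₂ - 1)) * Jb (c₁ - c₂) ^ (1 - (ρ₁ + ρ₂)) := by ring
        nlinarith [hIA, hIB, ht1, ht2]
  rw [div_eq_mul_inv, ← Real.rpow_neg hJd.le,
    show -(ρ₁ + ρ₂ - 1) = 1 - (ρ₁ + ρ₂) from by ring]
  exact htotal
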